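/- arXiv:2306.01810 — 3 statements merged into one kernel-verified Lean document; each statement's English description precedes it below -/
import Mathlib

section
/- Let R and ω be real constants, let 𝓗(t) = R·[[−cosh(2ωt), i·sinh(2ωt)], [i·sinh(2ωt), cosh(2ωt)]] be the hyperbolic Hamiltonian, and let F₀ = −ω·σ_y where σ_y = [[0, −i], [i, 0]]. Then the hyperbolic brachistochrone (von Neumann) equation holds: for every real t, −(d/dt)𝓗(t) = 𝓗(t)·F₀ − F₀·𝓗(t) (the derivative taken entrywise), and moreover trace(𝓗(t)·F₀) = 0 for all t. -/
/-- The hyperbolic Hamiltonian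
`𝓗(t) = R·[[−cosh 2ωt, i sinh 2ωt],[i sinh 2ωt, cosh 2ωt]]`. -/
noncomputable def hypHam (R ω t : ℝ) : Matrix (Fin 2) (Fin 2) ℂ :=
  (R : ℂ) •
    !![-(Real.cosh (2 * ω * t) : ℂ), Complex.I * Real.sinh (2 * ω * t);
       Complex.I * Real.sinh (2 * ω * t), (Real.cosh (2 * ω * t) : ℂ)]

/-- The Pauli matrix `σ_y = [[0, −i],[i, 0]]`. -/
noncomputable def sigmaY : Matrix (Fin 2) (Fin 2) ℂ :=
  !![0, -Complex.I; Complex.I, 0]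

lemma hdC_cosh (ω t : ℝ) :
    HasDerivAt (fun s : ℝ => Complex.cosh (2 * (ω : ℂ) * (s : ℂ)))
      (2 * ω * Complex.sinh (2 * ω * t)) t := by
  have h : HasDerivAt (fun z : ℂ => Complex.cosh (2 * (ω : ℂ) * z))
      (2 * ω * Complex.sinh (2 * ω * t)) ((t : ℝ) : ℂ) := by
    have := (Complex.hasDerivAt_cosh (2 * (ω : ℂ) * (t : ℂ))).comp ((t : ℝ) : ℂ)
      ((hasDerivAt_id ((t : ℝ) : ℂ)).const_mul (2 * (ω : ℂ)))
    simpa [Function.comp_def, mul_comm, mul_assoc, mul_left_comm] using this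
  exact h.comp_ofReal

lemma hdC_sinh (ω t : ℝ) :
    HasDerivAt (fun s : ℝ => Complex.sinh (2 * (ω : ℂ) * (s : ℂ)))
      (2 * ω * Complex.cosh (2 * ω * t)) t := by
  have h : HasDerivAt (fun z : ℂ => Complex.sinh (2 * (ω : ℂ) * z))
      (2 * ω * Complex.cosh (2 * ω * t)) ((t : ℝ) : ℂ) := by
    have := (Complex.hasDerivAt_sinh (2 * (ω : ℂ) * (t : ℂ))).comp ((t : ℝ) : ℂ)
      ((hasDerivAt_id ((t : ℝ) : ℂ)).const_mul (2 * (ω : ℂ)))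
    simpa [Function.comp_def, mul_comm, mul_assoc, mul_left_comm] using this
  exact h.comp_ofReal

/-- The hyperbolic brachistochrone (von Neumann) equation: with constraint
`F₀ = −ω·σ_y`, we have `−(d/dt)𝓗(t) = 𝓗(t)F₀ − F₀𝓗(t)` (entrywise derivative),
and the trace condition `tr(𝓗(t)·F₀) = 0` holds for all `t`. -/
theorem hyperbolic_brachistochrone (R ω : ℝ) :
    (∀ (t : ℝ) (i j : Fin 2),
        HasDerivAt (fun s : ℝ => hypHam R ω s i j)
          (-((hypHam R ω t * (-(ω : ℂ) • sigmaY) - (-(ω : ℂ) • sigmaY) * hypHam R ω t) i j)) t)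
    ∧ (∀ t : ℝ, (hypHam R ω t * (-(ω : ℂ) • sigmaY)).trace = 0) := by
  constructor
  · intro t i j
    fin_cases i <;> fin_cases j <;>
      simp [hypHam, sigmaY, Matrix.mul_apply, Fin.sum_univ_two]
    · convert ((hdC_cosh ω t).const_mul (R : ℂ)).neg using 1
      · rfl
      · ext s; simp
      ring_nf
      rw [Complex.I_sq]
      ring
    · convert (hdC_sinh ω t).const_mul ((R : ℂ) * Complex.I) using 1
      · rfl
      · ext s; ring
      · ring
    · convert (hdC_sinh ω t).const_mul ((R : ℂ) * Complex.I) using 1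
      · rfl
      · ext s; ring
      · ring
    · convert (hdC_cosh ω t).const_mul (R : ℂ) using 1
      · rfl
      ring_nf
      rw [Complex.I_sq]
      ring
  · intro t
    simp [Matrix.trace_fin_two, hypHam, sigmaY, Matrix.mul_apply, Fin.sum_univ_two]
end

section
/- Let k and c be real numbers, and let f : ℝ → ℂ be twice continuously differentiable on [0, ∞) with f(0) = 0 and f'(0) = 0, and suppose there are constants C ≥ 0 and a ∈ ℝ with |f(z)| ≤ C·e^{az}, |f'(z)| ≤ C·e^{az}, |f''(z)| ≤ C·e^{az} for all z ≥ 0. For p > a define the Laplace transform F(p) = ∫₀^∞ e^{−pz} f(z) dz. Then F is twice differentiable on (a, ∞) and for every p > a: ∫₀^∞ e^{−pz}·( (z² − 1)·f''(z) + 2(z − k)·f'(z) + c·f(z) ) dz = p²·F''(p) + 2p·F'(p) + (c − 2pk − p²)·F(p); i.e. the Laplace transform carries the transformed Legendre operator to the Whittaker-type operator. -/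
open MeasureTheory

namespace LTW

open Set Filter Topology

/-- `h` has exponential order (strictly) `a`: it is bounded by `C e^{bz}` for every `b > a`. -/
def ExpOrd (h : ℝ → ℂ) (a : ℝ) : Prop :=
  ∀ b, a < b → ∃ C, 0 ≤ C ∧ ∀ z, 0 ≤ z → ‖h z‖ ≤ C * Real.exp (b * z)

lemma expOrd_of_bound {h : ℝ → ℂ} {C a : ℝ} (hC : 0 ≤ C)
    (hb : ∀ z, 0 ≤ z → ‖h z‖ ≤ C * Real.exp (a * z)) : ExpOrd h a := by
  intro b hab
  exact ⟨C, hC, fun z hz => (hb z hz).trans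
    (mul_le_mul_of_nonneg_left (Real.exp_le_exp.2 (mul_le_mul_of_nonneg_right hab.le hz)) hC)⟩

lemma self_le_exp {δ : ℝ} (hδ : 0 < δ) (z : ℝ) : z ≤ δ⁻¹ * Real.exp (δ * z) := by
  rw [inv_mul_eq_div, le_div_iff₀ hδ]
  nlinarith [Real.add_one_le_exp (δ * z)]

lemma ExpOrd.mul_id {h : ℝ → ℂ} {a : ℝ} (hh : ExpOrd h a) :
    ExpOrd (fun z => (z : ℂ) * h z) a := by
  intro b hb
  obtain ⟨C, hC0, hC⟩ := hh ((a + b) / 2) (by linarith)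
  have hδ : 0 < b - (a + b) / 2 := by linarith
  refine ⟨(b - (a + b) / 2)⁻¹ * C, by positivity, fun z hz => ?_⟩
  have h1 : ‖(z : ℂ) * h z‖ = z * ‖h z‖ := by
    rw [norm_mul, Complex.norm_real, Real.norm_of_nonneg hz]
  rw [h1]
  calc z * ‖h z‖
      ≤ ((b - (a + b) / 2)⁻¹ * Real.exp ((b - (a + b) / 2) * z)) * (C * Real.exp ((a + b) / 2 * z)) :=
        mul_le_mul (self_le_exp hδ z) (hC z hz) (norm_nonneg _) (by positivity)
    _ = (b - (a + b) / 2)⁻¹ * C * Real.exp (b * z) := by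
        rw [mul_mul_mul_comm, ← Real.exp_add]
        congr 1
        ring

lemma ExpOrd.add {h1 h2 : ℝ → ℂ} {a : ℝ} (hh1 : ExpOrd h1 a) (hh2 : ExpOrd h2 a) :
    ExpOrd (fun z => h1 z + h2 z) a := by
  intro b hb
  obtain ⟨C1, hC1, hb1⟩ := hh1 b hb
  obtain ⟨C2, hC2, hb2⟩ := hh2 b hb
  refine ⟨C1 + C2, by linarith, fun z hz => ?_⟩
  calc ‖h1 z + h2 z‖ ≤ ‖h1 z‖ + ‖h2 z‖ := norm_add_le _ _
    _ ≤ C1 * Real.exp (b * z) + C2 * Real.exp (b * z) := add_le_add (hb1 z hz) (hb2 z hz)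
    _ = (C1 + C2) * Real.exp (b * z) := by ring

lemma ExpOrd.const_mul {h : ℝ → ℂ} {a : ℝ} (hh : ExpOrd h a) (c : ℂ) :
    ExpOrd (fun z => c * h z) a := by
  intro b hb
  obtain ⟨C, hC0, hC⟩ := hh b hb
  refine ⟨‖c‖ * C, by positivity, fun z hz => ?_⟩
  rw [norm_mul, mul_assoc]
  exact mul_le_mul_of_nonneg_left (hC z hz) (norm_nonneg c)

lemma norm_cexp (p z : ℝ) : ‖Complex.exp (-(p : ℂ) * z)‖ = Real.exp (-(p * z))  := by
  rw [Complex.norm_exp]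
  congr 1
  simp

lemma integrableOn_exp_mul_of_bound (h : ℝ → ℂ) (hcont : ContinuousOn h (Ici 0))
    {C b p : ℝ} (hb : ∀ z, 0 ≤ z → ‖h z‖ ≤ C * Real.exp (b * z)) (hp : b < p) :
    IntegrableOn (fun z : ℝ => Complex.exp (-(p : ℂ) * z) * h z) (Ioi 0) := by
  have hmeas : AEStronglyMeasurable (fun z : ℝ => Complex.exp (-(p : ℂ) * z) * h z)
      (volume.restrict (Ioi 0)) := by
    apply ContinuousOn.aestronglyMeasurable ?_ measurableSet_Ioi
    exact ((Complex.continuous_exp.comp (by continuity)).continuousOn.mul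
      (hcont.mono Ioi_subset_Ici_self))
  have hint : Integrable (fun z : ℝ => C * Real.exp (-(p - b) * z)) (volume.restrict (Ioi 0)) :=
    (exp_neg_integrableOn_Ioi 0 (by linarith : (0:ℝ) < p - b)).const_mul C
  refine Integrable.mono' hint hmeas ?_
  filter_upwards [ae_restrict_mem measurableSet_Ioi] with z hz
  have hz0 : (0:ℝ) ≤ z := le_of_lt hz
  calc ‖Complex.exp (-(p : ℂ) * z) * h z‖
      = Real.exp (-(p * z)) * ‖h z‖ := by rw [norm_mul, norm_cexp]
    _ ≤ Real.exp (-(p * z)) * (C * Real.exp (b * z)) :=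
        mul_le_mul_of_nonneg_left (hb z hz0) (Real.exp_pos _).le
    _ = C * Real.exp (-(p - b) * z) := by
        rw [mul_left_comm, ← Real.exp_add]
        congr 2
        ring

lemma integrableOn_of_expOrd (h : ℝ → ℂ) (hcont : ContinuousOn h (Ici 0)) {a p : ℝ}
    (hh : ExpOrd h a) (hp : a < p) :
    IntegrableOn (fun z : ℝ => Complex.exp (-(p : ℂ) * z) * h z) (Ioi 0) := by
  obtain ⟨C, hC0, hC⟩ := hh ((a + p) / 2) (by linarith)
  exact integrableOn_exp_mul_of_bound h hcont hC (by linarith)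

lemma integrableOn_id_mul_exp {δ : ℝ} (hδ : 0 < δ) (C : ℝ) (hC : 0 ≤ C) :
    IntegrableOn (fun z : ℝ => C * z * Real.exp (-δ * z)) (Ioi 0) := by
  have hint : Integrable (fun z : ℝ => (C * (δ/2)⁻¹) * Real.exp (-(δ/2) * z))
      (volume.restrict (Ioi 0)) :=
    (exp_neg_integrableOn_Ioi 0 (by linarith : (0:ℝ) < δ/2)).const_mul _
  refine Integrable.mono' hint ?_ ?_
  · exact (Continuous.aestronglyMeasurable (by continuity)).restrict
  · filter_upwards [ae_restrict_mem measurableSet_Ioi] with z hz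
    have hz0 : (0:ℝ) ≤ z := le_of_lt hz
    have h1 : z ≤ (δ/2)⁻¹ * Real.exp ((δ/2) * z) := self_le_exp (by linarith) z
    rw [Real.norm_of_nonneg (by positivity)]
    calc C * z * Real.exp (-δ * z)
        ≤ C * ((δ/2)⁻¹ * Real.exp ((δ/2) * z)) * Real.exp (-δ * z) := by
          exact mul_le_mul_of_nonneg_right (mul_le_mul_of_nonneg_left h1 hC) (Real.exp_pos _).le
      _ = (C * (δ/2)⁻¹) * Real.exp (-(δ/2) * z) := by
          rw [show C * ((δ/2)⁻¹ * Real.exp (δ/2 * z)) * Real.exp (-δ * z)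
              = (C * (δ/2)⁻¹) * (Real.exp (δ/2 * z) * Real.exp (-δ * z)) from by ring,
            ← Real.exp_add]
          congr 2
          ring

lemma hasDerivAt_cexp_mul (h : ℝ → ℂ) (q z : ℝ) :
    HasDerivAt (fun q : ℝ => Complex.exp (-(q : ℂ) * z) * h z)
      (Complex.exp (-(q : ℂ) * z) * (-(z : ℂ) * h z)) q := by
  have h2 : HasDerivAt (fun w : ℂ => -w * (z : ℂ)) (-(z : ℂ)) (q : ℂ) := by
    simpa using ((hasDerivAt_id (q : ℂ)).neg.mul_const (z : ℂ))
  have h1 : HasDerivAt (fun w : ℂ => Complex.exp (-w * z))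
      (Complex.exp (-(q : ℂ) * z) * -(z : ℂ)) (q : ℂ) := h2.cexp
  have h3 := (h1.comp_ofReal).mul_const (h z)
  simpa [mul_assoc] using h3

/-- Differentiation under the integral sign for the Laplace transform. -/
lemma hasDerivAt_LT (h : ℝ → ℂ) (hcont : ContinuousOn h (Ici 0)) {a p : ℝ}
    (hh : ExpOrd h a) (hp : a < p) :
    HasDerivAt (fun q : ℝ => ∫ z in Ioi (0:ℝ), Complex.exp (-(q : ℂ) * z) * h z)
      (∫ z in Ioi (0:ℝ), Complex.exp (-(p : ℂ) * z) * (-(z : ℂ) * h z)) p := by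
  have hab : a < (a + p) / 2 := by linarith
  have hbp : (a + p) / 2 < p := by linarith
  set b : ℝ := (a + p) / 2 with hbdef
  obtain ⟨C, hC0, hC⟩ := hh b hab
  set ε : ℝ := (p - b) / 2 with hεdef
  have hε : 0 < ε := by rw [hεdef]; linarith
  have key := hasDerivAt_integral_of_dominated_loc_of_deriv_le (μ := volume.restrict (Ioi 0))
    (F := fun (q : ℝ) (z : ℝ) => Complex.exp (-(q : ℂ) * z) * h z)
    (F' := fun (q : ℝ) (z : ℝ) => Complex.exp (-(q : ℂ) * z) * (-(z : ℂ) * h z))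
    (x₀ := p) (bound := fun z => C * z * Real.exp (-ε * z)) (Metric.ball_mem_nhds p hε)
    ?_ ?_ ?_ ?_ ?_ ?_
  · exact key.2
  · filter_upwards with q
    apply ContinuousOn.aestronglyMeasurable ?_ measurableSet_Ioi
    exact ((Complex.continuous_exp.comp (by continuity)).continuousOn.mul
      (hcont.mono Ioi_subset_Ici_self))
  · exact integrableOn_exp_mul_of_bound h hcont hC hbp
  · apply ContinuousOn.aestronglyMeasurable ?_ measurableSet_Ioi
    apply ContinuousOn.mul
    · exact (Complex.continuous_exp.comp (by continuity)).continuousOn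
    · exact (Continuous.continuousOn (by continuity)).mul (hcont.mono Ioi_subset_Ici_self)
  · filter_upwards [ae_restrict_mem measurableSet_Ioi] with z hz q hq
    have hz0 : (0:ℝ) ≤ z := le_of_lt hz
    have hq' : b + ε < q := by
      rw [Metric.mem_ball, Real.dist_eq, abs_sub_lt_iff] at hq
      have : p - q < ε := hq.2
      rw [hεdef] at *
      linarith
    have hnorm : ‖Complex.exp (-(q : ℂ) * z) * (-(z : ℂ) * h z)‖
        = Real.exp (-(q * z)) * (z * ‖h z‖) := by
      rw [norm_mul, norm_cexp, norm_mul, norm_neg, Complex.norm_real, Real.norm_of_nonneg hz0]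
    rw [hnorm]
    calc Real.exp (-(q * z)) * (z * ‖h z‖)
        ≤ Real.exp (-(q * z)) * (z * (C * Real.exp (b * z))) := by
          exact mul_le_mul_of_nonneg_left
            (mul_le_mul_of_nonneg_left (hC z hz0) hz0) (Real.exp_pos _).le
      _ = C * z * Real.exp ((b - q) * z) := by
          rw [show Real.exp (-(q*z)) * (z * (C * Real.exp (b*z)))
              = C * z * (Real.exp (b*z) * Real.exp (-(q*z))) from by ring, ← Real.exp_add]
          congr 2
          ring
      _ ≤ C * z * Real.exp (-ε * z) := by
          apply mul_le_mul_of_nonneg_left _ (by positivity)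
          exact Real.exp_le_exp.2 (mul_le_mul_of_nonneg_right (by linarith) hz0)
  · exact integrableOn_id_mul_exp hε C hC0
  · filter_upwards with z q hq
    exact hasDerivAt_cexp_mul h q z

/-- Integration by parts: the Laplace transform of `g'` is `p` times that of `g`. -/
lemma LT_deriv (g g' : ℝ → ℂ) (hg : ∀ z, 0 ≤ z → HasDerivAt g (g' z) z)
    (hg'c : ContinuousOn g' (Ici 0)) (hg0 : g 0 = 0)
    {a p : ℝ} (hEg : ExpOrd g a) (hEg' : ExpOrd g' a) (hp : a < p) :
    ∫ z in Ioi (0:ℝ), Complex.exp (-(p : ℂ) * z) * g' z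
      = (p : ℂ) * ∫ z in Ioi (0:ℝ), Complex.exp (-(p : ℂ) * z) * g z := by
  have hgc : ContinuousOn g (Ici 0) := fun z hz => (hg z hz).continuousAt.continuousWithinAt
  have hintg' : IntegrableOn (fun z : ℝ => Complex.exp (-(p : ℂ) * z) * g' z) (Ioi 0) :=
    integrableOn_of_expOrd _ hg'c hEg' hp
  have hintg : IntegrableOn (fun z : ℝ => Complex.exp (-(p : ℂ) * z) * g z) (Ioi 0) :=
    integrableOn_of_expOrd _ hgc hEg hp
  have hu : ∀ z ∈ Ioi (0:ℝ), HasDerivAt (fun z : ℝ => Complex.exp (-(p : ℂ) * z) * g z)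
      (-(p : ℂ) * (Complex.exp (-(p : ℂ) * z) * g z) + Complex.exp (-(p : ℂ) * z) * g' z) z := by
    intro z hz
    have hc : HasDerivAt (fun z : ℝ => Complex.exp (-(p : ℂ) * z))
        (Complex.exp (-(p : ℂ) * z) * -(p : ℂ)) z := by
      have h2 : HasDerivAt (fun w : ℂ => -(p : ℂ) * w) (-(p : ℂ)) (z : ℂ) := by
        simpa using (hasDerivAt_id (z : ℂ)).const_mul (-(p : ℂ))
      exact (h2.cexp).comp_ofReal
    have := hc.mul (hg z (le_of_lt hz))
    exact this.congr_deriv (by ring)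
  obtain ⟨C, hC0, hC⟩ := hEg ((a + p) / 2) (by linarith)
  have htend : Tendsto (fun z : ℝ => Complex.exp (-(p : ℂ) * z) * g z) atTop (𝓝 0) := by
    apply squeeze_zero_norm' (a := fun z : ℝ => C * Real.exp (-((p - (a+p)/2) * z)))
    · filter_upwards [eventually_ge_atTop (0:ℝ)] with z hz0
      calc ‖Complex.exp (-(p : ℂ) * z) * g z‖
          = Real.exp (-(p * z)) * ‖g z‖ := by rw [norm_mul, norm_cexp]
        _ ≤ Real.exp (-(p * z)) * (C * Real.exp ((a+p)/2 * z)) :=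
            mul_le_mul_of_nonneg_left (hC z hz0) (Real.exp_pos _).le
        _ = C * Real.exp (-((p - (a+p)/2) * z)) := by
            rw [show Real.exp (-(p*z)) * (C * Real.exp ((a+p)/2 * z))
                = C * (Real.exp ((a+p)/2 * z) * Real.exp (-(p*z))) from by ring, ← Real.exp_add]
            congr 2
            ring
    · have h1 : Tendsto (fun z : ℝ => (p - (a+p)/2) * z) atTop atTop :=
        Tendsto.const_mul_atTop (by linarith) tendsto_id
      have h2 := Real.tendsto_exp_neg_atTop_nhds_zero.comp h1
      simpa using h2.const_mul C
  have hibp := integral_Ioi_of_hasDerivAt_of_tendsto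
    (f := fun z : ℝ => Complex.exp (-(p : ℂ) * z) * g z)
    (f' := fun z : ℝ => -(p : ℂ) * (Complex.exp (-(p : ℂ) * z) * g z)
        + Complex.exp (-(p : ℂ) * z) * g' z)
    ?_ hu ?_ htend
  · rw [integral_add (hintg.const_mul _) hintg', integral_const_mul] at hibp
    simp only [Complex.ofReal_zero, mul_zero, neg_zero, Complex.exp_zero, one_mul, hg0,
      mul_zero, zero_sub, neg_eq_zero] at hibp
    linear_combination hibp
  · exact (((Complex.continuous_exp.comp (by continuity)).continuousOn).mul hgc).continuousWithinAt
      (self_mem_Ici)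
  · exact (hintg.const_mul _).add hintg'

/-- Splitting a Laplace transform of `c₁ h₁ + h₂`. -/
lemma LT_add (p : ℝ) (c1 : ℂ) (h1 h2 : ℝ → ℂ)
    (hi1 : IntegrableOn (fun z : ℝ => Complex.exp (-(p : ℂ) * z) * h1 z) (Ioi 0))
    (hi2 : IntegrableOn (fun z : ℝ => Complex.exp (-(p : ℂ) * z) * h2 z) (Ioi 0)) :
    ∫ z in Ioi (0:ℝ), Complex.exp (-(p : ℂ) * z) * (c1 * h1 z + h2 z)
      = c1 * (∫ z in Ioi (0:ℝ), Complex.exp (-(p : ℂ) * z) * h1 z)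
        + ∫ z in Ioi (0:ℝ), Complex.exp (-(p : ℂ) * z) * h2 z := by
  have hEq : EqOn (fun z : ℝ => Complex.exp (-(p : ℂ) * z) * (c1 * h1 z + h2 z))
      (fun z : ℝ => c1 * (Complex.exp (-(p : ℂ) * z) * h1 z)
        + Complex.exp (-(p : ℂ) * z) * h2 z) (Ioi 0) := fun z _ => by ring
  rw [setIntegral_congr_fun measurableSet_Ioi hEq, integral_add (hi1.const_mul c1) hi2,
    integral_const_mul]

end LTW

/-- The Laplace transform carries the transformed Legendre operator
`(z²−1)f'' + 2(z−k)f' + c·f` to the Whittaker-type operator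
`p²F'' + 2pF' + (c − 2pk − p²)F`, for `f` of class C² on `[0,∞)` with
`f(0) = f'(0) = 0` and `f, f', f''` of exponential order `a`. -/
theorem laplace_transform_whittaker (k c a C : ℝ) (hC : 0 ≤ C)
    (f f' f'' : ℝ → ℂ)
    (hd1 : ∀ z : ℝ, 0 ≤ z → HasDerivAt f (f' z) z)
    (hd2 : ∀ z : ℝ, 0 ≤ z → HasDerivAt f' (f'' z) z)
    (hcont : ContinuousOn f'' (Set.Ici 0))
    (h0 : f 0 = 0) (h0' : f' 0 = 0)
    (hgf : ∀ z : ℝ, 0 ≤ z → ‖f z‖ ≤ C * Real.exp (a * z))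
    (hgf' : ∀ z : ℝ, 0 ≤ z → ‖f' z‖ ≤ C * Real.exp (a * z))
    (hgf'' : ∀ z : ℝ, 0 ≤ z → ‖f'' z‖ ≤ C * Real.exp (a * z))
    (F : ℝ → ℂ)
    (hF : ∀ p : ℝ, a < p →
      F p = ∫ z in Set.Ioi (0 : ℝ), Complex.exp (-(p : ℂ) * z) * f z) :
    (∀ p : ℝ, a < p → DifferentiableAt ℝ F p ∧ DifferentiableAt ℝ (deriv F) p)
    ∧ ∀ p : ℝ, a < p →
        (∫ z in Set.Ioi (0 : ℝ), Complex.exp (-(p : ℂ) * z)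
            * (((z : ℂ) ^ 2 - 1) * f'' z + 2 * ((z : ℂ) - k) * f' z + (c : ℂ) * f z))
          = (p : ℂ) ^ 2 * deriv (deriv F) p + 2 * (p : ℂ) * deriv F p
            + ((c : ℂ) - 2 * (p : ℂ) * k - (p : ℂ) ^ 2) * F p := by
  open Set Filter Topology LTW in
  -- continuity facts
  have contf : ContinuousOn f (Set.Ici 0) :=
    fun z hz => (hd1 z hz).continuousAt.continuousWithinAt
  have contf' : ContinuousOn f' (Set.Ici 0) :=
    fun z hz => (hd2 z hz).continuousAt.continuousWithinAt
  have contid : ContinuousOn (fun z : ℝ => (z : ℂ)) (Set.Ici 0) :=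
    Complex.continuous_ofReal.continuousOn
  have contf1 : ContinuousOn (fun z : ℝ => (z : ℂ) * f z) (Set.Ici 0) := contid.mul contf
  have contf2 : ContinuousOn (fun z : ℝ => (z : ℂ) * ((z : ℂ) * f z)) (Set.Ici 0) :=
    contid.mul contf1
  have contg1 : ContinuousOn (fun z : ℝ => (z : ℂ) * f' z) (Set.Ici 0) := contid.mul contf'
  have contg2 : ContinuousOn (fun z : ℝ => (z : ℂ) * ((z : ℂ) * f' z)) (Set.Ici 0) :=
    contid.mul contg1
  have contk2 : ContinuousOn (fun z : ℝ => (z : ℂ) * ((z : ℂ) * f'' z)) (Set.Ici 0) :=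
    contid.mul (contid.mul hcont)
  -- exponential orders
  have Ef : ExpOrd f a := expOrd_of_bound hC hgf
  have Ef' : ExpOrd f' a := expOrd_of_bound hC hgf'
  have Ef'' : ExpOrd f'' a := expOrd_of_bound hC hgf''
  have Ef1 : ExpOrd (fun z => (z : ℂ) * f z) a := Ef.mul_id
  have Ef2 : ExpOrd (fun z => (z : ℂ) * ((z : ℂ) * f z)) a := Ef1.mul_id
  have Eg1 : ExpOrd (fun z => (z : ℂ) * f' z) a := Ef'.mul_id
  have Eg2 : ExpOrd (fun z => (z : ℂ) * ((z : ℂ) * f' z)) a := Eg1.mul_id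
  have Ek2 : ExpOrd (fun z => (z : ℂ) * ((z : ℂ) * f'' z)) a := Ef''.mul_id.mul_id
  -- derivatives of the auxiliary products
  have hid : ∀ z : ℝ, HasDerivAt (fun t : ℝ => (t : ℂ)) 1 z := fun z => by
    exact Complex.ofRealCLM.hasDerivAt
  have hdf2 : ∀ z : ℝ, 0 ≤ z → HasDerivAt (fun z : ℝ => (z : ℂ) * ((z : ℂ) * f z))
      (2 * ((z : ℂ) * f z) + (z : ℂ) * ((z : ℂ) * f' z)) z := by
    intro z hz
    have := (hid z).mul ((hid z).mul (hd1 z hz))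
    exact this.congr_deriv (by simp only [Pi.mul_apply]; ring)
  have hdg2 : ∀ z : ℝ, 0 ≤ z → HasDerivAt (fun z : ℝ => (z : ℂ) * ((z : ℂ) * f' z))
      (2 * ((z : ℂ) * f' z) + (z : ℂ) * ((z : ℂ) * f'' z)) z := by
    intro z hz
    have := (hid z).mul ((hid z).mul (hd2 z hz))
    exact this.congr_deriv (by simp only [Pi.mul_apply]; ring)
  -- derivative of the Laplace transform of f
  have hφ : ∀ p : ℝ, a < p →
      HasDerivAt (fun q : ℝ => ∫ z in Set.Ioi (0:ℝ), Complex.exp (-(q : ℂ) * z) * f z)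
        (-∫ z in Set.Ioi (0:ℝ), Complex.exp (-(p : ℂ) * z) * ((z : ℂ) * f z)) p := by
    intro p hp
    have h := hasDerivAt_LT f contf Ef hp
    convert h using 1
    rw [← integral_neg]
    apply setIntegral_congr_fun measurableSet_Ioi
    intro z _
    ring
  have hψ : ∀ p : ℝ, a < p →
      HasDerivAt (fun q : ℝ => -∫ z in Set.Ioi (0:ℝ), Complex.exp (-(q : ℂ) * z) * ((z : ℂ) * f z))
        (∫ z in Set.Ioi (0:ℝ), Complex.exp (-(p : ℂ) * z) * ((z : ℂ) * ((z : ℂ) * f z))) p := by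
    intro p hp
    have h := (hasDerivAt_LT (fun z => (z : ℂ) * f z) contf1 Ef1 hp).neg
    refine h.congr_deriv ?_
    rw [← integral_neg]
    apply setIntegral_congr_fun measurableSet_Ioi
    intro z _
    ring
  have hFev : ∀ p : ℝ, a < p →
      F =ᶠ[𝓝 p] (fun q : ℝ => ∫ z in Set.Ioi (0:ℝ), Complex.exp (-(q : ℂ) * z) * f z) :=
    fun p hp => eventually_of_mem (Ioi_mem_nhds hp) (fun q hq => hF q hq)
  have hderivF : ∀ p : ℝ, a < p →
      deriv F p = -∫ z in Set.Ioi (0:ℝ), Complex.exp (-(p : ℂ) * z) * ((z : ℂ) * f z) := by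
    intro p hp
    rw [Filter.EventuallyEq.deriv_eq (hFev p hp), (hφ p hp).deriv]
  have hderivFev : ∀ p : ℝ, a < p →
      deriv F =ᶠ[𝓝 p]
        (fun q : ℝ => -∫ z in Set.Ioi (0:ℝ), Complex.exp (-(q : ℂ) * z) * ((z : ℂ) * f z)) :=
    fun p hp => eventually_of_mem (Ioi_mem_nhds hp) (fun q hq => hderivF q hq)
  have hderiv2F : ∀ p : ℝ, a < p →
      deriv (deriv F) p
        = ∫ z in Set.Ioi (0:ℝ), Complex.exp (-(p : ℂ) * z) * ((z : ℂ) * ((z : ℂ) * f z)) := by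
    intro p hp
    rw [Filter.EventuallyEq.deriv_eq (hderivFev p hp), (hψ p hp).deriv]
  refine ⟨fun p hp => ⟨?_, ?_⟩, fun p hp => ?_⟩
  · exact (Filter.EventuallyEq.differentiableAt_iff (hFev p hp)).2 (hφ p hp).differentiableAt
  · exact (Filter.EventuallyEq.differentiableAt_iff (hderivFev p hp)).2
      (hψ p hp).differentiableAt
  · -- the main computation
    -- integrabilities
    have i1 : IntegrableOn
        (fun z : ℝ => Complex.exp (-(p : ℂ) * z) * ((z : ℂ) * ((z : ℂ) * f'' z))) (Set.Ioi 0) :=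
      integrableOn_of_expOrd _ contk2 Ek2 hp
    have i2 : IntegrableOn (fun z : ℝ => Complex.exp (-(p : ℂ) * z) * f'' z) (Set.Ioi 0) :=
      integrableOn_of_expOrd _ hcont Ef'' hp
    have i3 : IntegrableOn
        (fun z : ℝ => Complex.exp (-(p : ℂ) * z) * ((z : ℂ) * f' z)) (Set.Ioi 0) :=
      integrableOn_of_expOrd _ contg1 Eg1 hp
    have i4 : IntegrableOn (fun z : ℝ => Complex.exp (-(p : ℂ) * z) * f' z) (Set.Ioi 0) :=
      integrableOn_of_expOrd _ contf' Ef' hp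
    have i5 : IntegrableOn (fun z : ℝ => Complex.exp (-(p : ℂ) * z) * f z) (Set.Ioi 0) :=
      integrableOn_of_expOrd _ contf Ef hp
    have if1 : IntegrableOn
        (fun z : ℝ => Complex.exp (-(p : ℂ) * z) * ((z : ℂ) * f z)) (Set.Ioi 0) :=
      integrableOn_of_expOrd _ contf1 Ef1 hp
    have if2 : IntegrableOn
        (fun z : ℝ => Complex.exp (-(p : ℂ) * z) * ((z : ℂ) * ((z : ℂ) * f z))) (Set.Ioi 0) :=
      integrableOn_of_expOrd _ contf2 Ef2 hp
    have ig2 : IntegrableOn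
        (fun z : ℝ => Complex.exp (-(p : ℂ) * z) * ((z : ℂ) * ((z : ℂ) * f' z))) (Set.Ioi 0) :=
      integrableOn_of_expOrd _ contg2 Eg2 hp
    -- IBP identities
    have e1p : (∫ z in Set.Ioi (0:ℝ), Complex.exp (-(p : ℂ) * z) * f' z)
        = (p : ℂ) * ∫ z in Set.Ioi (0:ℝ), Complex.exp (-(p : ℂ) * z) * f z :=
      LT_deriv f f' hd1 contf' h0 Ef Ef' hp
    have e2p : (∫ z in Set.Ioi (0:ℝ), Complex.exp (-(p : ℂ) * z) * f'' z)
        = (p : ℂ) * ∫ z in Set.Ioi (0:ℝ), Complex.exp (-(p : ℂ) * z) * f' z :=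
      LT_deriv f' f'' hd2 hcont h0' Ef' Ef'' hp
    have e4p := LT_deriv (fun z => (z : ℂ) * ((z : ℂ) * f z))
      (fun z => 2 * ((z : ℂ) * f z) + (z : ℂ) * ((z : ℂ) * f' z)) hdf2
      (((continuous_const.continuousOn).mul contf1).add contg2) (by simp)
      Ef2 ((Ef1.const_mul 2).add Eg2) hp
    have e5p := LT_deriv (fun z => (z : ℂ) * ((z : ℂ) * f' z))
      (fun z => 2 * ((z : ℂ) * f' z) + (z : ℂ) * ((z : ℂ) * f'' z)) hdg2
      (((continuous_const.continuousOn).mul contg1).add contk2) (by simp)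
      Eg2 ((Eg1.const_mul 2).add Ek2) hp
    rw [LT_add p 2 _ _ if1 ig2] at e4p
    rw [LT_add p 2 _ _ i3 i1] at e5p
    -- split the big integral
    have hEq : Set.EqOn
        (fun z : ℝ => Complex.exp (-(p : ℂ) * z)
          * (((z : ℂ) ^ 2 - 1) * f'' z + 2 * ((z : ℂ) - k) * f' z + (c : ℂ) * f z))
        (fun z : ℝ => Complex.exp (-(p : ℂ) * z) * ((z : ℂ) * ((z : ℂ) * f'' z))
          - Complex.exp (-(p : ℂ) * z) * f'' z
          + (2 : ℂ) * (Complex.exp (-(p : ℂ) * z) * ((z : ℂ) * f' z))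
          - (2 * (k : ℂ)) * (Complex.exp (-(p : ℂ) * z) * f' z)
          + (c : ℂ) * (Complex.exp (-(p : ℂ) * z) * f z)) (Set.Ioi 0) := fun z _ => by ring
    beta_reduce at e4p e5p
    have iA1 : IntegrableOn (fun z : ℝ =>
        Complex.exp (-(p : ℂ) * z) * ((z : ℂ) * ((z : ℂ) * f'' z))
          - Complex.exp (-(p : ℂ) * z) * f'' z) (Set.Ioi 0) := i1.sub i2
    have iA2 : IntegrableOn (fun z : ℝ =>
        Complex.exp (-(p : ℂ) * z) * ((z : ℂ) * ((z : ℂ) * f'' z))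
          - Complex.exp (-(p : ℂ) * z) * f'' z
          + (2 : ℂ) * (Complex.exp (-(p : ℂ) * z) * ((z : ℂ) * f' z))) (Set.Ioi 0) :=
      iA1.add (i3.const_mul 2)
    have iA3 : IntegrableOn (fun z : ℝ =>
        Complex.exp (-(p : ℂ) * z) * ((z : ℂ) * ((z : ℂ) * f'' z))
          - Complex.exp (-(p : ℂ) * z) * f'' z
          + (2 : ℂ) * (Complex.exp (-(p : ℂ) * z) * ((z : ℂ) * f' z))
          - (2 * (k : ℂ)) * (Complex.exp (-(p : ℂ) * z) * f' z)) (Set.Ioi 0) :=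
      iA2.sub (i4.const_mul _)
    rw [setIntegral_congr_fun measurableSet_Ioi hEq,
      integral_add iA3 (i5.const_mul _),
      integral_sub iA2 (i4.const_mul _),
      integral_add iA1 (i3.const_mul 2),
      integral_sub i1 i2, integral_const_mul, integral_const_mul, integral_const_mul,
      hderiv2F p hp, hderivF p hp, hF p hp]
    linear_combination e5p + (p : ℂ) * e4p - e2p - ((p : ℂ) + 2 * (k : ℂ)) * e1p
end

section
/- Let k and c be real numbers, and let f : ℝ → ℂ be twice continuously differentiable on [0, ∞) with f(0) = 0 and f'(0) = 0, and suppose there are constants C ≥ 0 and a ∈ ℝ with |f(z)| ≤ C·e^{az}, |f'(z)| ≤ C·e^{az}, |f''(z)| ≤ C·e^{az} for all z ≥ 0. For p > a define the Laplace transform F(p) = ∫₀^∞ e^{−pz} f(z) dz. Then F is twice differentiable on (a, ∞) and for every p > a: ∫₀^∞ e^{−pz}·( (z² − 1)·f''(z) + 2(k + 1)·z·f'(z) + (c + k(k + 1))·f(z) ) dz = p²·F''(p) + (2 − 2k)·p·F'(p) + (k(k − 1) + c − p²)·F(p); i.e. the Laplace transform carries the power-conjugated Legendre operator to the modified Bessel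 (Macdonald)-type operator. -/
open MeasureTheory

section LTaux
open MeasureTheory Set Filter Asymptotics Topology

lemma LT.pow_exp_tendsto (n : ℕ) {b : ℝ} (hb : 0 < b) :
    Tendsto (fun z : ℝ => z ^ n * Real.exp (-b * z)) atTop (nhds 0) := by
  have h := tendsto_rpow_mul_exp_neg_mul_atTop_nhds_zero (n : ℝ) b hb
  apply h.congr'
  filter_upwards [eventually_gt_atTop 0] with z hz
  rw [Real.rpow_natCast]

lemma LT.pow_exp_integrable (n : ℕ) {b : ℝ} (hb : 0 < b) :
    IntegrableOn (fun z : ℝ => z ^ n * Real.exp (-b * z)) (Set.Ioi 0) := by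
  refine integrable_of_isBigO_exp_neg (half_pos hb) (Continuous.continuousOn (by continuity)) ?_
  rw [isBigO_iff]
  refine ⟨1, ?_⟩
  have h := (LT.pow_exp_tendsto n (half_pos hb)).eventually_le_const (by norm_num : (0:ℝ) < 1)
  filter_upwards [h, eventually_ge_atTop 0] with z hz hz0
  have : -b * z = -(b/2) * z + -(b/2) * z := by ring
  rw [this, Real.exp_add]
  rw [Real.norm_eq_abs, Real.norm_eq_abs, abs_of_nonneg (by positivity), abs_of_nonneg (by positivity)]
  calc z ^ n * (Real.exp (-(b/2)*z) * Real.exp (-(b/2)*z))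
      = (z ^ n * Real.exp (-(b/2)*z)) * Real.exp (-(b/2)*z) := by ring
    _ ≤ 1 * Real.exp (-(b/2)*z) := by
        apply mul_le_mul_of_nonneg_right hz (Real.exp_pos _).le

lemma LT.norm_aux {C aa : ℝ} {g : ℝ → ℂ} (hb : ∀ z : ℝ, 0 ≤ z → ‖g z‖ ≤ C * Real.exp (aa * z))
    (n : ℕ) (q : ℝ) {z : ℝ} (hz : 0 ≤ z) :
    ‖(z:ℂ) ^ n * Complex.exp (-(q:ℂ) * z) * g z‖ ≤ C * (z ^ n * Real.exp (-(q - aa) * z)) := by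
  have h1 : ‖Complex.exp (-(q:ℂ) * z)‖ = Real.exp (-q * z) := by
    rw [Complex.norm_exp]; norm_num
  rw [norm_mul, norm_mul, norm_pow, Complex.norm_real, Real.norm_eq_abs, abs_of_nonneg hz, h1]
  have h2 : Real.exp (-(q - aa) * z) = Real.exp (-q * z) * Real.exp (aa * z) := by
    rw [← Real.exp_add]; ring_nf
  rw [h2]
  calc z ^ n * Real.exp (-q * z) * ‖g z‖
      ≤ z ^ n * Real.exp (-q * z) * (C * Real.exp (aa * z)) := by
        apply mul_le_mul_of_nonneg_left (hb z hz) (by positivity)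
    _ = C * (z ^ n * (Real.exp (-q * z) * Real.exp (aa * z))) := by ring

noncomputable def LTaux (g : ℝ → ℂ) (n : ℕ) (p : ℝ) : ℂ :=
  ∫ z in Set.Ioi (0:ℝ), (z:ℂ) ^ n * Complex.exp (-(p:ℂ) * z) * g z

lemma LT.contOn {g : ℝ → ℂ} (hg : ContinuousOn g (Set.Ici 0)) (n : ℕ) (q : ℝ) :
    ContinuousOn (fun z : ℝ => (z:ℂ) ^ n * Complex.exp (-(q:ℂ) * z) * g z) (Set.Ici 0) := by
  apply ContinuousOn.mul _ hg
  apply Continuous.continuousOn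
  continuity

lemma LT.integrable {C aa : ℝ} {g : ℝ → ℂ} (hg : ContinuousOn g (Set.Ici 0))
    (hb : ∀ z : ℝ, 0 ≤ z → ‖g z‖ ≤ C * Real.exp (aa * z)) (n : ℕ) {q : ℝ} (hq : aa < q) :
    IntegrableOn (fun z : ℝ => (z:ℂ) ^ n * Complex.exp (-(q:ℂ) * z) * g z) (Set.Ioi 0) := by
  have hC : 0 ≤ C := le_trans (norm_nonneg (g 0)) (by simpa using hb 0 le_rfl)
  have hbpos : 0 < q - aa := by linarith
  refine Iff.mp integrableOn_Ici_iff_integrableOn_Ioi ?_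
  refine ((LT.contOn hg n q).locallyIntegrableOn measurableSet_Ici).integrableOn_of_isBigO_atTop
    ?_ ⟨Set.Ioi 0, Ioi_mem_atTop 0, exp_neg_integrableOn_Ioi 0 (half_pos hbpos)⟩
  rw [isBigO_iff]
  refine ⟨C, ?_⟩
  have h := (LT.pow_exp_tendsto n (half_pos hbpos)).eventually_le_const (by norm_num : (0:ℝ) < 1)
  filter_upwards [h, eventually_ge_atTop 0] with z hz1 hz0
  calc ‖(z:ℂ) ^ n * Complex.exp (-(q:ℂ) * z) * g z‖
      ≤ C * (z ^ n * Real.exp (-(q - aa) * z)) := LT.norm_aux hb n q hz0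
    _ ≤ C * ‖Real.exp (-((q-aa)/2) * z)‖ := by
        rw [Real.norm_eq_abs, abs_of_nonneg (Real.exp_pos _).le]
        apply mul_le_mul_of_nonneg_left _ hC
        have : -(q-aa) * z = -((q-aa)/2) * z + -((q-aa)/2) * z := by ring
        rw [this, Real.exp_add]
        calc z ^ n * (Real.exp (-((q-aa)/2)*z) * Real.exp (-((q-aa)/2)*z))
            = (z ^ n * Real.exp (-((q-aa)/2)*z)) * Real.exp (-((q-aa)/2)*z) := by ring
          _ ≤ 1 * Real.exp (-((q-aa)/2)*z) := mul_le_mul_of_nonneg_right hz1 (Real.exp_pos _).le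
          _ = Real.exp (-((q-aa)/2)*z) := one_mul _

lemma LT.tendsto_zero {C aa : ℝ} {g : ℝ → ℂ}
    (hb : ∀ z : ℝ, 0 ≤ z → ‖g z‖ ≤ C * Real.exp (aa * z)) (n : ℕ) {q : ℝ} (hq : aa < q) :
    Tendsto (fun z : ℝ => (z:ℂ) ^ n * Complex.exp (-(q:ℂ) * z) * g z) atTop (nhds 0) := by
  have hbpos : 0 < q - aa := by linarith
  refine squeeze_zero_norm' (a := fun z => C * (z ^ n * Real.exp (-(q - aa) * z))) ?_ ?_
  · filter_upwards [eventually_ge_atTop 0] with z hz using LT.norm_aux hb n q hz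
  · simpa using (LT.pow_exp_tendsto n hbpos).const_mul C

lemma LT.hasDerivAt {C aa : ℝ} {g : ℝ → ℂ} (hg : ContinuousOn g (Set.Ici 0))
    (hb : ∀ z : ℝ, 0 ≤ z → ‖g z‖ ≤ C * Real.exp (aa * z)) (n : ℕ) {p : ℝ} (hp : aa < p) :
    HasDerivAt (LTaux g n) (-(LTaux g (n+1) p)) p := by
  have hC : 0 ≤ C := le_trans (norm_nonneg (g 0)) (by simpa using hb 0 le_rfl)
  set ε := (p - aa)/2 with hεdef
  have hε : 0 < ε := half_pos (by linarith)
  have key := hasDerivAt_integral_of_dominated_loc_of_deriv_le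
    (μ := volume.restrict (Set.Ioi (0:ℝ)))
    (F := fun (q : ℝ) (z : ℝ) => (z:ℂ)^n * Complex.exp (-(q:ℂ)*z) * g z)
    (F' := fun (q : ℝ) (z : ℝ) => -((z:ℂ)^(n+1) * Complex.exp (-(q:ℂ)*z) * g z))
    (x₀ := p) (bound := fun z => C * (z^(n+1) * Real.exp (-ε * z))) (Metric.ball_mem_nhds p hε)
    (Filter.Eventually.of_forall fun q =>
      ((LT.contOn hg n q).mono Set.Ioi_subset_Ici_self).aestronglyMeasurable measurableSet_Ioi)
    (LT.integrable hg hb n hp)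
    ((((LT.contOn hg (n+1) p).mono Set.Ioi_subset_Ici_self).aestronglyMeasurable
      measurableSet_Ioi).neg)
    ?_ ?_ ?_
  · have h2 : (∫ z in Set.Ioi (0:ℝ), -((z:ℂ)^(n+1) * Complex.exp (-(p:ℂ)*z) * g z))
        = -(LTaux g (n+1) p) := by
      rw [integral_neg]; rfl
    rw [h2] at key
    exact key.2
  · rw [ae_restrict_iff' measurableSet_Ioi]
    refine ae_of_all _ fun z hz => fun q hq => ?_
    have hz0 : (0:ℝ) ≤ z := le_of_lt hz
    rw [norm_neg]
    calc ‖(z:ℂ)^(n+1) * Complex.exp (-(q:ℂ)*z) * g z‖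
        ≤ C * (z^(n+1) * Real.exp (-(q - aa) * z)) := LT.norm_aux hb (n+1) q hz0
      _ ≤ C * (z^(n+1) * Real.exp (-ε * z)) := by
          apply mul_le_mul_of_nonneg_left _ hC
          apply mul_le_mul_of_nonneg_left _ (by positivity)
          apply Real.exp_le_exp.mpr
          have : |q - p| < ε := by simpa [Real.dist_eq] using hq
          have hqa : ε ≤ q - aa := by
            have := abs_lt.mp this
            simp only [hεdef] at *
            linarith [this.1]
          nlinarith
  · exact (LT.pow_exp_integrable (n+1) hε).const_mul C
  · refine ae_of_all _ fun z => fun q hq => ?_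
    have hinner : HasDerivAt (fun q : ℝ => -(q:ℂ)*(z:ℂ)) (-(z:ℂ)) q := by
      simpa using ((Complex.ofRealCLM.hasDerivAt (x := q)).neg.mul_const (z:ℂ))
    have hexp : HasDerivAt (fun q : ℝ => Complex.exp (-(q:ℂ)*z))
        (Complex.exp (-(q:ℂ)*z) * (-(z:ℂ))) q := hinner.cexp
    have := (hexp.const_mul ((z:ℂ)^n)).mul_const (g z)
    refine this.congr_deriv ?_
    push_cast
    ring

lemma LT.ibp {C aa : ℝ} {g g' : ℝ → ℂ}
    (hd : ∀ z : ℝ, 0 ≤ z → HasDerivAt g (g' z) z)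
    (hg' : ContinuousOn g' (Set.Ici 0))
    (hbg : ∀ z : ℝ, 0 ≤ z → ‖g z‖ ≤ C * Real.exp (aa * z))
    (hbg' : ∀ z : ℝ, 0 ≤ z → ‖g' z‖ ≤ C * Real.exp (aa * z))
    (n : ℕ) (h0 : (0:ℂ)^n * g 0 = 0) {p : ℝ} (hp : aa < p) :
    LTaux g' n p = (p:ℂ) * LTaux g n p - (n:ℂ) * LTaux g (n-1) p := by
  have hgc : ContinuousOn g (Set.Ici 0) := fun z hz => (hd z hz).continuousAt.continuousWithinAt
  have i1 : IntegrableOn (fun z : ℝ => (z:ℂ)^(n-1) * Complex.exp (-(p:ℂ)*z) * g z) (Set.Ioi 0) :=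
    LT.integrable hgc hbg _ hp
  have i2 := LT.integrable hgc hbg n hp
  have i3 := LT.integrable hg' hbg' n hp
  set u := fun z : ℝ => (z:ℂ)^n * Complex.exp (-(p:ℂ)*z) * g z with hu
  set v := fun z : ℝ => (n:ℂ) * ((z:ℂ)^(n-1) * Complex.exp (-(p:ℂ)*z) * g z)
      + (-(p:ℂ)) * ((z:ℂ)^n * Complex.exp (-(p:ℂ)*z) * g z)
      + ((z:ℂ)^n * Complex.exp (-(p:ℂ)*z) * g' z) with hv
  have hv_int : IntegrableOn v (Set.Ioi 0) := ((i1.const_mul _).add (i2.const_mul _)).add i3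
  have hderiv : ∀ x ∈ Set.Ioi (0:ℝ), HasDerivAt u (v x) x := by
    intro x hx
    have hre : HasDerivAt (fun z : ℝ => (z:ℂ)) 1 x := by
      have := Complex.ofRealCLM.hasDerivAt (x := x); simp at this; exact this
    have hpow : HasDerivAt (fun z : ℝ => (z:ℂ)^n) ((n:ℂ) * (x:ℂ)^(n-1)) x :=
      (hasDerivAt_pow n ((x:ℂ))).comp_ofReal
    have hexp : HasDerivAt (fun z : ℝ => Complex.exp (-(p:ℂ)*z))
        (Complex.exp (-(p:ℂ)*x) * (-(p:ℂ))) x := by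
      have h1 : HasDerivAt (fun z : ℝ => -(p:ℂ)*(z:ℂ)) (-(p:ℂ)) x := by
        simpa using hre.const_mul (-(p:ℂ))
      simpa using h1.cexp
    have := (hpow.mul hexp).mul (hd x (le_of_lt hx))
    refine this.congr_deriv ?_
    simp only [hv, Pi.mul_apply]
    ring
  have hcont : ContinuousWithinAt u (Set.Ici 0) 0 :=
    (LT.contOn hgc n p) 0 (Set.mem_Ici.mpr le_rfl)
  have htend : Tendsto u atTop (nhds 0) := LT.tendsto_zero hbg n hp
  have h00 : u 0 = 0 := by
    simp only [hu, Complex.ofReal_zero, mul_zero, neg_zero, Complex.exp_zero, mul_one]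
    exact h0
  have key := integral_Ioi_of_hasDerivAt_of_tendsto
    (hcont.mono (by simp : Set.Ici (0:ℝ) ⊆ Set.Ici 0)) hderiv hv_int htend
  rw [h00, sub_zero] at key
  have hsplit : ∫ z in Set.Ioi (0:ℝ), v z
      = (n:ℂ) * LTaux g (n-1) p + (-(p:ℂ)) * LTaux g n p + LTaux g' n p := by
    simp only [hu] at i2
    simp only [hv, hu]
    rw [integral_add _ i3, integral_add (i1.const_mul _) (i2.const_mul _),
      integral_const_mul, integral_const_mul]
    · rfl
    · exact (i1.const_mul _).add (i2.const_mul _)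
  rw [hsplit] at key
  linear_combination key
end LTaux

/-- The Laplace transform carries the power-conjugated Legendre operator
`(z²−1)f'' + 2(k+1)z f' + (c + k(k+1))·f` to the modified Bessel (Macdonald)-type
operator `p²F'' + (2−2k)pF' + (k(k−1) + c − p²)F`, for `f` of class C² on `[0,∞)`
with `f(0) = f'(0) = 0` and `f, f', f''` of exponential order `a`. -/
theorem laplace_transform_macdonald (k c a C : ℝ) (hC : 0 ≤ C)
    (f f' f'' : ℝ → ℂ)
    (hd1 : ∀ z : ℝ, 0 ≤ z → HasDerivAt f (f' z) z)
    (hd2 : ∀ z : ℝ, 0 ≤ z → HasDerivAt f' (f'' z) z)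
    (hcont : ContinuousOn f'' (Set.Ici 0))
    (h0 : f 0 = 0) (h0' : f' 0 = 0)
    (hgf : ∀ z : ℝ, 0 ≤ z → ‖f z‖ ≤ C * Real.exp (a * z))
    (hgf' : ∀ z : ℝ, 0 ≤ z → ‖f' z‖ ≤ C * Real.exp (a * z))
    (hgf'' : ∀ z : ℝ, 0 ≤ z → ‖f'' z‖ ≤ C * Real.exp (a * z))
    (F : ℝ → ℂ)
    (hF : ∀ p : ℝ, a < p →
      F p = ∫ z in Set.Ioi (0 : ℝ), Complex.exp (-(p : ℂ) * z) * f z) :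
    (∀ p : ℝ, a < p → DifferentiableAt ℝ F p ∧ DifferentiableAt ℝ (deriv F) p)
    ∧ ∀ p : ℝ, a < p →
        (∫ z in Set.Ioi (0 : ℝ), Complex.exp (-(p : ℂ) * z)
            * (((z : ℂ) ^ 2 - 1) * f'' z + 2 * ((k : ℂ) + 1) * (z : ℂ) * f' z
              + ((c : ℂ) + (k : ℂ) * ((k : ℂ) + 1)) * f z))
          = (p : ℂ) ^ 2 * deriv (deriv F) p + (2 - 2 * (k : ℂ)) * (p : ℂ) * deriv F p
            + ((k : ℂ) * ((k : ℂ) - 1) + (c : ℂ) - (p : ℂ) ^ 2) * F p := by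
  have hfc : ContinuousOn f (Set.Ici 0) := fun z hz => (hd1 z hz).continuousAt.continuousWithinAt
  have hf'c : ContinuousOn f' (Set.Ici 0) := fun z hz => (hd2 z hz).continuousAt.continuousWithinAt
  have hFeq : ∀ p : ℝ, a < p → F p = LTaux f 0 p := by
    intro p hp
    rw [hF p hp, LTaux]
    simp only [pow_zero, one_mul]
  have hmem : ∀ p : ℝ, a < p → Set.Ioi a ∈ nhds p := fun p hp => Ioi_mem_nhds hp
  have hF1 : ∀ p : ℝ, a < p → HasDerivAt F (-(LTaux f 1 p)) p := by
    intro p hp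
    refine (LT.hasDerivAt hfc hgf 0 hp).congr_of_eventuallyEq ?_
    filter_upwards [hmem p hp] with q hq using hFeq q hq
  have hderivF : ∀ q ∈ Set.Ioi a, deriv F q = -(LTaux f 1 q) := fun q hq => (hF1 q hq).deriv
  have hF2 : ∀ p : ℝ, a < p → HasDerivAt (deriv F) (LTaux f 2 p) p := by
    intro p hp
    have h : HasDerivAt (fun q : ℝ => -(LTaux f 1 q)) (LTaux f 2 p) p := by
      have := (LT.hasDerivAt hfc hgf 1 hp).neg; rw [neg_neg] at this; exact this
    refine h.congr_of_eventuallyEq ?_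
    filter_upwards [hmem p hp] with q hq using hderivF q hq
  refine ⟨fun p hp => ⟨(hF1 p hp).differentiableAt, (hF2 p hp).differentiableAt⟩, ?_⟩
  intro p hp
  have e1 := LT.ibp hd1 hf'c hgf hgf' 0 (by simp [h0]) hp
  have e2 := LT.ibp hd1 hf'c hgf hgf' 1 (by simp) hp
  have e3 := LT.ibp hd1 hf'c hgf hgf' 2 (by simp) hp
  have e4 := LT.ibp hd2 hcont hgf' hgf'' 0 (by simp [h0']) hp
  have e5 := LT.ibp hd2 hcont hgf' hgf'' 2 (by simp) hp
  norm_num at e1 e2 e3 e4 e5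
  have ha1 := LT.integrable hcont hgf'' 2 hp
  have ha2 := LT.integrable hcont hgf'' 0 hp
  have ha3 := LT.integrable hf'c hgf' 1 hp
  have ha4 := LT.integrable hfc hgf 0 hp
  have hsplit : (∫ z in Set.Ioi (0 : ℝ), Complex.exp (-(p : ℂ) * z)
        * (((z : ℂ) ^ 2 - 1) * f'' z + 2 * ((k : ℂ) + 1) * (z : ℂ) * f' z
          + ((c : ℂ) + (k : ℂ) * ((k : ℂ) + 1)) * f z))
      = (LTaux f'' 2 p - LTaux f'' 0 p) + (2 * ((k:ℂ) + 1)) * LTaux f' 1 p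
        + ((c:ℂ) + (k:ℂ) * ((k:ℂ) + 1)) * LTaux f 0 p := by
    rw [show (fun z : ℝ => Complex.exp (-(p : ℂ) * z)
        * (((z : ℂ) ^ 2 - 1) * f'' z + 2 * ((k : ℂ) + 1) * (z : ℂ) * f' z
          + ((c : ℂ) + (k : ℂ) * ((k : ℂ) + 1)) * f z))
      = fun z : ℝ =>
        ((z:ℂ)^2 * Complex.exp (-(p:ℂ) * z) * f'' z
            - (z:ℂ)^0 * Complex.exp (-(p:ℂ) * z) * f'' z)
          + ((2 * ((k:ℂ) + 1)) * ((z:ℂ)^1 * Complex.exp (-(p:ℂ) * z) * f' z))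
          + (((c:ℂ) + (k:ℂ) * ((k:ℂ) + 1)) * ((z:ℂ)^0 * Complex.exp (-(p:ℂ) * z) * f z))
      from funext fun z => by ring]
    rw [integral_add _ (ha4.const_mul _), integral_add _ (ha3.const_mul _),
      integral_sub ha1 ha2, integral_const_mul, integral_const_mul]
    · rfl
    · exact ha1.sub ha2
    · exact (ha1.sub ha2).add (ha3.const_mul _)
  rw [hsplit, (hF2 p hp).deriv, hderivF p hp, hFeq p hp]
  linear_combination e5 - e4 + (p:ℂ) * e3 + (2*(k:ℂ)) * e2 - (p:ℂ) * e1
end
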